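/- Let X_1, X_2, … be i.i.d. with E X_1 = a ≠ 0 and Var X_1 = σ² < ∞, and N(λ) Poisson(λ) independent of the X_j. Then ζ_2( (1/(aλ)) Σ_{j=1}^{N(λ)} X_j , 1 ) ≤ (1/(2λ)) (1 + σ²/a²). -/

import Mathlib

open MeasureTheory ProbabilityTheory Real Set Finset

noncomputable section

/-- The Zolotarev function class `F_s` for `s = m + α`: bounded, `m` times
continuously differentiable functions whose `m`-th derivative is `α`-Hölder
with constant 1. -/
def zClass (m : ℕ) (α : ℝ) : Set (ℝ → ℝ) :=
  {f | (∃ C, ∀ x, |f x| ≤ C) ∧ ContDiff ℝ m f ∧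
    ∀ x y, |iteratedDeriv m f x - iteratedDeriv m f y| ≤ |x - y| ^ α}

/-- Zolotarev ζ-distance between two laws on ℝ, for `s = m + α`. -/
def zetaM (m : ℕ) (α : ℝ) (P Q : Measure ℝ) : ℝ :=
  sSup { d | ∃ f ∈ zClass m α, d = |(∫ x, f x ∂P) - ∫ x, f x ∂Q| }

/-- Zolotarev ζ-distance between two random variables. -/
def zeta {Ω₁ Ω₂ : Type*} [MeasurableSpace Ω₁] [MeasurableSpace Ω₂]
    (m : ℕ) (α : ℝ) (P₁ : Measure Ω₁) (P₂ : Measure Ω₂)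
    (X : Ω₁ → ℝ) (Y : Ω₂ → ℝ) : ℝ :=
  zetaM m α (P₁.map X) (P₂.map Y)

end

open scoped ENNReal

/-- Quadratic Taylor bound, case `c ≤ x`. -/
lemma zzTaylor_aux {f : ℝ → ℝ} (hf : ContDiff ℝ 1 f)
    (hl : ∀ x y, |deriv f x - deriv f y| ≤ |x - y|) {c x : ℝ} (h : c ≤ x) :
    |f x - f c - deriv f c * (x - c)| ≤ (x - c) ^ 2 / 2 := by
  have hd : Differentiable ℝ f := hf.differentiable one_ne_zero
  have hc : Continuous (deriv f) := hf.continuous_deriv le_rfl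
  have hFTC : ∫ t in c..x, deriv f t = f x - f c :=
    intervalIntegral.integral_deriv_eq_sub (fun t _ => hd t) (hc.intervalIntegrable c x)
  have h1 : f x - f c - deriv f c * (x - c) = ∫ t in c..x, (deriv f t - deriv f c) := by
    rw [intervalIntegral.integral_sub (hc.intervalIntegrable c x) intervalIntegrable_const,
      hFTC, intervalIntegral.integral_const, smul_eq_mul]
    ring
  have h2 : (∫ t in c..x, (t - c)) = (x - c) ^ 2 / 2 := by
    rw [intervalIntegral.integral_sub intervalIntegral.intervalIntegrable_id
      intervalIntegrable_const, integral_id, intervalIntegral.integral_const, smul_eq_mul]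
    ring
  have h3 : |∫ t in c..x, (deriv f t - deriv f c)| ≤ ∫ t in c..x, |deriv f t - deriv f c| :=
    intervalIntegral.abs_integral_le_integral_abs h
  have h4 : (∫ t in c..x, |deriv f t - deriv f c|) ≤ ∫ t in c..x, (t - c) := by
    apply intervalIntegral.integral_mono_on h
      ((hc.sub continuous_const).abs.intervalIntegrable _ _)
      ((continuous_id.sub continuous_const).intervalIntegrable _ _)
    intro t ht
    calc |deriv f t - deriv f c| ≤ |t - c| := hl t c
      _ = t - c := abs_of_nonneg (by linarith [ht.1])
  rw [h1]
  linarith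

/-- Quadratic Taylor bound for `C¹` functions with 1-Lipschitz derivative. -/
lemma zzTaylor {f : ℝ → ℝ} (hf : ContDiff ℝ 1 f)
    (hl : ∀ x y, |deriv f x - deriv f y| ≤ |x - y|) (c x : ℝ) :
    |f x - f c - deriv f c * (x - c)| ≤ (x - c) ^ 2 / 2 := by
  rcases le_total c x with h | h
  · exact zzTaylor_aux hf hl h
  · have hg : ContDiff ℝ 1 (fun t : ℝ => f (-t)) := hf.comp contDiff_neg
    have hgd : ∀ t : ℝ, deriv (fun s : ℝ => f (-s)) t = -deriv f (-t) := fun t => deriv_comp_neg f t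
    have hgl : ∀ u v : ℝ, |deriv (fun s : ℝ => f (-s)) u - deriv (fun s : ℝ => f (-s)) v|
        ≤ |u - v| := by
      intro u v
      rw [hgd, hgd]
      have e1 : -deriv f (-u) - -deriv f (-v) = -(deriv f (-u) - deriv f (-v)) := by ring
      have e2 : (-u : ℝ) - -v = -(u - v) := by ring
      calc |-deriv f (-u) - -deriv f (-v)| = |deriv f (-u) - deriv f (-v)| := by
            rw [e1, abs_neg]
        _ ≤ |(-u) - (-v)| := hl _ _
        _ = |u - v| := by rw [e2, abs_neg]
    have key := zzTaylor_aux hg hgl (c := -c) (x := -x) (by linarith)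
    rw [hgd] at key
    simp only [neg_neg] at key
    have e1 : f x - f c - -deriv f c * (-x - -c) = f x - f c - deriv f c * (x - c) := by ring
    have e2 : (-x - -c) ^ 2 = (x - c) ^ 2 := by ring
    rw [e1, e2] at key
    exact key

/-- The basic exponential series. -/
lemma zzExp (lam : ℝ) : HasSum (fun k : ℕ => lam ^ k / k.factorial) (Real.exp lam) := by
  have := NormedSpace.expSeries_div_hasSum_exp lam
  rwa [← Real.exp_eq_exp_ℝ] at this

lemma zzP0 (lam : ℝ) :
    HasSum (fun k : ℕ => Real.exp (-lam) * lam ^ k / k.factorial) 1 := by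
  have h := (zzExp lam).mul_left (Real.exp (-lam))
  have : Real.exp (-lam) * Real.exp lam = 1 := by
    rw [← Real.exp_add]; simp
  rw [this] at h
  convert h using 2 with k
  · rfl
  ring

lemma zzP1 (lam : ℝ) :
    HasSum (fun k : ℕ => Real.exp (-lam) * lam ^ k / k.factorial * (k : ℝ)) lam := by
  have h : HasSum (fun k : ℕ =>
      Real.exp (-lam) * lam ^ (k + 1) / (k + 1).factorial * ((k : ℝ) + 1))
      (Real.exp (-lam) * lam * Real.exp lam) := by
    have h0 := (zzExp lam).mul_left (Real.exp (-lam) * lam)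
    convert h0 using 2 with k
    · rfl
    have hk : ((k + 1).factorial : ℝ) = ((k : ℝ) + 1) * k.factorial := by
      rw [Nat.factorial_succ]; push_cast; ring
    rw [hk]
    have h1 : ((k : ℝ) + 1) ≠ 0 := by positivity
    have h2 : (k.factorial : ℝ) ≠ 0 := Nat.cast_ne_zero.mpr k.factorial_ne_zero
    field_simp
    ring
  have h' := (hasSum_nat_add_iff (f := fun k : ℕ =>
      Real.exp (-lam) * lam ^ k / k.factorial * (k : ℝ)) 1).mp (by
    convert h using 2 with k
    · rfl
    push_cast
    ring_nf)
  simp only [Finset.range_one, Finset.sum_singleton, Nat.cast_zero, mul_zero, add_zero] at h'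
  have : Real.exp (-lam) * lam * Real.exp lam = lam := by
    rw [mul_comm (Real.exp (-lam)) lam, mul_assoc, ← Real.exp_add]; simp
  rwa [this] at h'

lemma zzP2 (lam : ℝ) :
    HasSum (fun k : ℕ => Real.exp (-lam) * lam ^ k / k.factorial * (k : ℝ) ^ 2)
      (lam ^ 2 + lam) := by
  have hbase : HasSum (fun k : ℕ =>
      Real.exp (-lam) * lam ^ k / k.factorial * ((k : ℝ) + 1)) (lam + 1) := by
    have := (zzP1 lam).add (zzP0 lam)
    convert this using 2 with k
    ring
  have h : HasSum (fun k : ℕ =>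
      Real.exp (-lam) * lam ^ (k + 1) / (k + 1).factorial * ((k : ℝ) + 1) ^ 2)
      (lam * (lam + 1)) := by
    have h0 := hbase.mul_left lam
    convert h0 using 2 with k
    · rfl
    have hk : ((k + 1).factorial : ℝ) = ((k : ℝ) + 1) * k.factorial := by
      rw [Nat.factorial_succ]; push_cast; ring
    rw [hk]
    have h1 : ((k : ℝ) + 1) ≠ 0 := by positivity
    have h2 : (k.factorial : ℝ) ≠ 0 := Nat.cast_ne_zero.mpr k.factorial_ne_zero
    field_simp
    ring
  have h' := (hasSum_nat_add_iff (f := fun k : ℕ =>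
      Real.exp (-lam) * lam ^ k / k.factorial * (k : ℝ) ^ 2) 1).mp (by
    convert h using 2 with k
    · rfl
    push_cast
    ring_nf)
  simp only [Finset.range_one, Finset.sum_singleton, Nat.cast_zero] at h'
  norm_num at h'
  convert h' using 1
  · rfl
  ring

lemma zzPoissonMean (lam a : ℝ) :
    HasSum (fun k : ℕ => Real.exp (-lam) * lam ^ k / k.factorial * ((k : ℝ) * a)) (a * lam) := by
  have h := (zzP1 lam).mul_right a
  convert h using 1
  · rfl
  · funext k; ring
  · ring

lemma zzPoissonMoment (lam a σ : ℝ) :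
    HasSum (fun k : ℕ => Real.exp (-lam) * lam ^ k / k.factorial *
      ((k : ℝ) * σ ^ 2 + ((k : ℝ) * a - a * lam) ^ 2)) (lam * σ ^ 2 + a ^ 2 * lam) := by
  have h := (((zzP2 lam).mul_right (a ^ 2)).add
      ((zzP1 lam).mul_right (σ ^ 2 - 2 * a ^ 2 * lam))).add
      ((zzP0 lam).mul_right (a ^ 2 * lam ^ 2))
  convert h using 1
  · rfl
  · funext k; ring
  · ring

lemma zzMeasurableY {Ω : Type*} [MeasurableSpace Ω] {X : ℕ → Ω → ℝ} {N : Ω → ℕ}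
    (hX : ∀ j, Measurable (X j)) (hN : Measurable N) :
    Measurable fun ω => ∑ j ∈ Finset.range (N ω), X j ω := by
  have hfun : Measurable fun p : (ℕ → ℝ) × ℕ => ∑ j ∈ Finset.range p.2, p.1 j := by
    exact measurable_from_prod_countable_left
      (fun n => Finset.measurable_sum (Finset.range n) (fun j _ => measurable_pi_apply j))
  have hpair : Measurable fun ω => (((fun j => X j ω), N ω) : (ℕ → ℝ) × ℕ) :=
    (measurable_pi_lambda _ hX).prodMk hN
  exact hfun.comp hpair
theorem stmt7 {Ω : Type*} [MeasurableSpace Ω] (P : Measure Ω) [IsProbabilityMeasure P]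
    (X : ℕ → Ω → ℝ) (N : Ω → ℕ) (a σ lam : ℝ) (hlam : 0 < lam)
    (hXmeas : ∀ j, Measurable (X j))
    (hindep : iIndepFun X P)
    (hident : ∀ j, P.map (X j) = P.map (X 0))
    (hL2 : MemLp (X 0) 2 P)
    (hmean : ∫ ω, X 0 ω ∂P = a) (ha : a ≠ 0) (hvar : variance (X 0) P = σ ^ 2)
    (hNmeas : Measurable N)
    (hNdist : ∀ k : ℕ, (P {ω | N ω = k}).toReal = Real.exp (-lam) * lam ^ k / k.factorial)
    (hNindep : IndepFun N (fun ω j => X j ω) P) :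
    zeta 1 1 P P (fun ω => (1 / (a * lam)) * ∑ j ∈ Finset.range (N ω), X j ω)
        (fun _ => (1 : ℝ)) ≤
      (1 / (2 * lam)) * (1 + σ ^ 2 / a ^ 2) := by
  classical
  have hlam' : lam ≠ 0 := ne_of_gt hlam
  have halam : a * lam ≠ 0 := mul_ne_zero ha hlam'
  set c : ℝ := 1 / (a * lam) with hcdef
  set S : Ω → ℝ := fun ω => c * ∑ j ∈ Finset.range (N ω), X j ω with hSdef
  set Y : Ω → ℝ := fun ω => ∑ j ∈ Finset.range (N ω), X j ω with hYdef
  set W : ℕ → Ω → ℝ := fun k ω => ∑ j ∈ Finset.range k, X j ω with hWdef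
  set A : ℕ → Set Ω := fun k => {ω | N ω = k} with hAdef
  set p : ℕ → ℝ := fun k => Real.exp (-lam) * lam ^ k / k.factorial with hpdef
  have hSY : ∀ ω, S ω = c * Y ω := fun ω => rfl
  have hpnn : ∀ k, 0 ≤ p k := by
    intro k
    have : (0:ℝ) < lam := hlam
    simp only [hpdef]
    positivity
  have hAmeas : ∀ k, MeasurableSet (A k) := fun k => hNmeas (measurableSet_singleton k)
  have hAdisj : Pairwise (Function.onFun Disjoint A) := by
    intro i j hij
    simp only [Function.onFun]
    apply Set.disjoint_left.mpr
    rintro ω h1 h2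
    exact hij ((h1 : N ω = i).symm.trans (h2 : N ω = j))
  have hAunion : (⋃ k, A k) = Set.univ := by
    ext ω; simp [hAdef]
  have hPA : ∀ k, P (A k) = ENNReal.ofReal (p k) := by
    intro k
    have h' : P (A k) = ENNReal.ofReal ((P (A k)).toReal) :=
      (ENNReal.ofReal_toReal (measure_ne_top P _)).symm
    rw [h']
    congr 1
    exact hNdist k
  have hWmeas : ∀ k, Measurable (W k) := fun k => Finset.measurable_sum _ fun j _ => hXmeas j
  have hYmeas : Measurable Y := zzMeasurableY hXmeas hNmeas
  -- identically distributed consequences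
  have hXj2 : ∀ j, MemLp (X j) 2 P := by
    intro j
    have h1 : MemLp id 2 (P.map (X j)) := by
      rw [hident j]
      exact (memLp_map_measure_iff aestronglyMeasurable_id (hXmeas 0).aemeasurable).mpr hL2
    have := (memLp_map_measure_iff aestronglyMeasurable_id (hXmeas j).aemeasurable).mp h1
    simpa [Function.comp] using this
  have hXjint : ∀ j, Integrable (X j) P := fun j => (hXj2 j).integrable one_le_two
  have htrans : ∀ (g : ℝ → ℝ), Continuous g →
      ∀ j, ∫ ω, g (X j ω) ∂P = ∫ ω, g (X 0 ω) ∂P := by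
    intro g hg j
    rw [← integral_map (hXmeas j).aemeasurable hg.aestronglyMeasurable, hident j,
      integral_map (hXmeas 0).aemeasurable hg.aestronglyMeasurable]
  have hXjmean : ∀ j, ∫ ω, X j ω ∂P = a := by
    intro j
    rw [← hmean]
    exact htrans id continuous_id j
  have hXjvar : ∀ j, variance (X j) P = σ ^ 2 := by
    intro j
    have hsq : ∫ ω, (X j ω) ^ 2 ∂P = ∫ ω, (X 0 ω) ^ 2 ∂P :=
      htrans (fun x => x ^ 2) (continuous_pow 2) j
    have h1 := variance_eq_sub (hXj2 j)
    have h2 := variance_eq_sub hL2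
    simp only [Pi.pow_apply] at h1 h2
    rw [h1, hsq, hXjmean j, ← hmean, ← h2, hvar]
  -- moments of the partial sums W k
  have hWmem : ∀ k, MemLp (W k) 2 P := by
    intro k
    have := memLp_finset_sum' (Finset.range k) (fun i (_ : i ∈ Finset.range k) => hXj2 i)
    have he : (∑ i ∈ Finset.range k, X i) = W k := by
      funext ω; simp [hWdef]
    rwa [he] at this
  have hWint : ∀ k, Integrable (W k) P := fun k => (hWmem k).integrable one_le_two
  have hWmean : ∀ k, ∫ ω, W k ω ∂P = k * a := by
    intro k
    simp only [hWdef]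
    rw [integral_finset_sum _ fun i _ => hXjint i]
    simp [hXjmean, mul_comm]
  have hWvar : ∀ k, variance (W k) P = k * σ ^ 2 := by
    intro k
    have he : (∑ i ∈ Finset.range k, X i) = W k := by
      funext ω; simp [hWdef]
    have := IndepFun.variance_sum (μ := P) (s := Finset.range k)
      (fun i _ => hXj2 i) (fun i _ j _ hij => hindep.indepFun hij)
    rw [he] at this
    rw [this]
    simp [hXjvar, mul_comm]
  have hWsqint : ∀ k, Integrable (fun ω => (W k ω - a * lam) ^ 2) P := by
    intro k
    have h := ((hWmem k).sub (memLp_const (a * lam))).integrable_sq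
    simpa using h
  have hWsq2 : ∀ k, ∫ ω, (W k ω) ^ 2 ∂P = k * σ ^ 2 + ((k : ℝ) * a) ^ 2 := by
    intro k
    have h := variance_eq_sub (hWmem k)
    simp only [Pi.pow_apply] at h
    rw [hWvar k, hWmean k] at h
    linarith
  have hWsq : ∀ k, ∫ ω, (W k ω - a * lam) ^ 2 ∂P
      = k * σ ^ 2 + ((k : ℝ) * a - a * lam) ^ 2 := by
    intro k
    have hexp : (fun ω => (W k ω - a * lam) ^ 2)
        = fun ω => (W k ω) ^ 2 - 2 * (a * lam) * W k ω + (a * lam) ^ 2 := by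
      funext ω; ring
    have i3 : Integrable (fun ω => (W k ω) ^ 2) P := (hWmem k).integrable_sq
    have i2 : Integrable (fun ω => 2 * (a * lam) * W k ω) P := by
      exact (hWint k).const_mul _
    have i1 : Integrable (fun ω => (W k ω) ^ 2 - 2 * (a * lam) * W k ω) P := by
      exact i3.sub i2
    rw [hexp]
    rw [integral_add i1 (integrable_const _), integral_sub i3 i2,
      integral_const_mul, integral_const, hWsq2 k, hWmean k]
    simp only [measure_univ, ENNReal.toReal_one, smul_eq_mul, one_mul, probReal_univ]
    ring
  have hXjabs : ∀ j, ∫ ω, |X j ω| ∂P = ∫ ω, |X 0 ω| ∂P :=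
    fun j => htrans (fun x => |x|) continuous_abs j
  set M : ℝ := ∫ ω, |X 0 ω| ∂P with hMdef
  have hMnn : 0 ≤ M := integral_nonneg fun ω => abs_nonneg _
  have hWabs : ∀ k, ∫ ω, |W k ω| ∂P ≤ k * M := by
    intro k
    calc ∫ ω, |W k ω| ∂P ≤ ∫ ω, ∑ j ∈ Finset.range k, |X j ω| ∂P := by
          apply integral_mono (hWint k).abs
            (integrable_finset_sum _ fun j _ => (hXjint j).abs)
          intro ω
          exact Finset.abs_sum_le_sum_abs _ _
      _ = k * M := by
          rw [integral_finset_sum _ fun j _ => (hXjint j).abs]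
          simp [hXjabs, mul_comm]
  -- independence: key factorization lemmas
  have hWindep : ∀ k, IndepFun N (W k) P := by
    intro k
    have hg : Measurable fun x : ℕ → ℝ => ∑ j ∈ Finset.range k, x j :=
      Finset.measurable_sum _ fun j _ => measurable_pi_apply j
    exact hNindep.comp measurable_id hg
  have hkey : ∀ (k : ℕ) (h : ℝ → ℝ≥0∞), Measurable h →
      ∫⁻ ω in A k, h (W k ω) ∂P = P (A k) * ∫⁻ ω, h (W k ω) ∂P := by
    intro k h hh
    have hφ : Measurable (Set.indicator {k} (fun _ => (1 : ℝ≥0∞)) : ℕ → ℝ≥0∞) :=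
      Measurable.indicator measurable_const (measurableSet_singleton k)
    have hind2 : IndepFun (fun ω => Set.indicator {k} (fun _ => (1 : ℝ≥0∞)) (N ω))
        (fun ω => h (W k ω)) P := (hWindep k).comp hφ hh
    have e1 : ∫⁻ ω in A k, h (W k ω) ∂P
        = ∫⁻ ω, Set.indicator {k} (fun _ => (1 : ℝ≥0∞)) (N ω) * h (W k ω) ∂P := by
      rw [← lintegral_indicator (hAmeas k)]
      congr 1
      funext ω
      by_cases hω : N ω = k
      · simp [Set.indicator, hω, hAdef]
      · simp [Set.indicator, hω, hAdef]
    have e2 : ∫⁻ ω, Set.indicator {k} (fun _ => (1 : ℝ≥0∞)) (N ω) ∂P = P (A k) := by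
      have : ∀ ω, Set.indicator {k} (fun _ => (1 : ℝ≥0∞)) (N ω)
          = (A k).indicator (fun _ => (1 : ℝ≥0∞)) ω := by
        intro ω
        by_cases hω : N ω = k
        · simp [Set.indicator, hω, hAdef]
        · simp [Set.indicator, hω, hAdef]
      rw [lintegral_congr this]
      exact lintegral_indicator_one (μ := P) (hAmeas k)
    have hm1 : AEMeasurable (fun ω => Set.indicator {k} (fun _ => (1 : ℝ≥0∞)) (N ω)) P := by
      exact (hφ.comp hNmeas).aemeasurable
    have hm2 : AEMeasurable (fun ω => h (W k ω)) P := by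
      exact (hh.comp (hWmeas k)).aemeasurable
    rw [e1, lintegral_mul_eq_lintegral_mul_lintegral_of_indepFun'' hm1 hm2 hind2, e2]
  have hkeyB : ∀ (k : ℕ) (h : ℝ → ℝ), Measurable h →
      ∫ ω in A k, h (W k ω) ∂P = p k * ∫ ω, h (W k ω) ∂P := by
    intro k h hh
    have hφ : Measurable (Set.indicator {k} (fun _ => (1 : ℝ)) : ℕ → ℝ) :=
      Measurable.indicator measurable_const (measurableSet_singleton k)
    have hind2 : IndepFun (fun ω => Set.indicator {k} (fun _ => (1 : ℝ)) (N ω))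
        (fun ω => h (W k ω)) P := (hWindep k).comp hφ hh
    have e1 : ∫ ω in A k, h (W k ω) ∂P
        = ∫ ω, Set.indicator {k} (fun _ => (1 : ℝ)) (N ω) * h (W k ω) ∂P := by
      rw [← integral_indicator (hAmeas k)]
      congr 1
      funext ω
      by_cases hω : N ω = k
      · simp [Set.indicator, hω, hAdef]
      · simp [Set.indicator, hω, hAdef]
    have e2 : ∫ ω, Set.indicator {k} (fun _ => (1 : ℝ)) (N ω) ∂P = p k := by
      have hcong : ∀ ω, Set.indicator {k} (fun _ => (1 : ℝ)) (N ω)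
          = (A k).indicator (fun _ => (1 : ℝ)) ω := by
        intro ω
        by_cases hω : N ω = k
        · simp [Set.indicator, hω, hAdef]
        · simp [Set.indicator, hω, hAdef]
      have h3 : ∫ ω, (A k).indicator (fun _ => (1:ℝ)) ω ∂P = (P (A k)).toReal := by
        exact integral_indicator_one (μ := P) (hAmeas k)
      rw [integral_congr_ae (ae_of_all _ hcong), h3]
      exact hNdist k
    have hm1 : AEStronglyMeasurable (fun ω => Set.indicator {k} (fun _ => (1 : ℝ)) (N ω)) P := by
      exact (hφ.comp hNmeas).aestronglyMeasurable
    have hm2 : AEStronglyMeasurable (fun ω => h (W k ω)) P := by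
      exact (hh.comp (hWmeas k)).aestronglyMeasurable
    rw [e1, ← e2]
    exact hind2.integral_mul_eq_mul_integral hm1 hm2
  -- partition of the integral according to the value of N
  have hYW : ∀ k, ∀ ω ∈ A k, Y ω = W k ω := by
    intro k ω hω
    have : N ω = k := hω
    simp [hYdef, hWdef, this]
  have hpart : ∀ (h : ℝ → ℝ≥0∞), Measurable h →
      ∫⁻ ω, h (Y ω) ∂P = ∑' k, P (A k) * ∫⁻ ω, h (W k ω) ∂P := by
    intro h hh
    have e0 : ∫⁻ ω, h (Y ω) ∂P = ∫⁻ ω in ⋃ k, A k, h (Y ω) ∂P := by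
      rw [hAunion, setLIntegral_univ]
    rw [e0, lintegral_iUnion hAmeas hAdisj]
    congr 1
    funext k
    rw [← hkey k h hh]
    apply setLIntegral_congr_fun (hAmeas k)
    exact fun ω hω => by rw [hYW k ω hω]
  have hpartB : ∀ (h : ℝ → ℝ), Measurable h → Integrable (fun ω => h (Y ω)) P →
      ∫ ω, h (Y ω) ∂P = ∑' k, p k * ∫ ω, h (W k ω) ∂P := by
    intro h hh hint
    have e0 : ∫ ω, h (Y ω) ∂P = ∫ ω in ⋃ k, A k, h (Y ω) ∂P := by
      rw [hAunion, setIntegral_univ]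
    rw [e0, integral_iUnion hAmeas hAdisj (by rw [hAunion]; exact hint.integrableOn)]
    congr 1
    funext k
    rw [← hkeyB k h hh]
    exact setIntegral_congr_fun (hAmeas k) fun ω hω => by rw [hYW k ω hω]
  -- integrability and moments of Y
  have hYint : Integrable Y P := by
    refine ⟨hYmeas.aestronglyMeasurable, ?_⟩
    have hmeas : Measurable fun x : ℝ => (‖x‖₊ : ℝ≥0∞) :=
      measurable_nnnorm.coe_nnreal_ennreal
    have h1 : ∫⁻ ω, ‖Y ω‖ₑ ∂P = ∑' k, P (A k) * ∫⁻ ω, ‖W k ω‖ₑ ∂P :=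
      hpart _ hmeas
    have h2 : ∀ k, P (A k) * ∫⁻ ω, ‖W k ω‖ₑ ∂P
        ≤ ENNReal.ofReal (p k * ((k : ℝ) * M)) := by
      intro k
      have e3 : ∫⁻ ω, ‖W k ω‖ₑ ∂P = ENNReal.ofReal (∫ ω, |W k ω| ∂P) := by
        rw [ofReal_integral_eq_lintegral_ofReal (hWint k).abs
          (ae_of_all _ fun ω => abs_nonneg _)]
        congr 1
        funext ω
        rw [Real.enorm_eq_ofReal_abs]
      rw [e3, hPA k, ← ENNReal.ofReal_mul (hpnn k)]
      apply ENNReal.ofReal_le_ofReal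
      exact mul_le_mul_of_nonneg_left (hWabs k) (hpnn k)
    have hsumm : Summable fun k : ℕ => p k * ((k : ℝ) * M) := by
      have := (zzPoissonMean lam M).summable
      simpa [hpdef, mul_comm, mul_assoc, mul_left_comm] using this
    have h3 : (∑' k, ENNReal.ofReal (p k * ((k : ℝ) * M)))
        = ENNReal.ofReal (∑' k, p k * ((k : ℝ) * M)) :=
      (ENNReal.ofReal_tsum_of_nonneg
        (fun k => mul_nonneg (hpnn k) (mul_nonneg (Nat.cast_nonneg k) hMnn)) hsumm).symm
    show (∫⁻ ω, ‖Y ω‖ₑ ∂P) < ⊤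
    rw [h1]
    calc (∑' k, P (A k) * ∫⁻ ω, ‖W k ω‖ₑ ∂P)
        ≤ ∑' k, ENNReal.ofReal (p k * ((k : ℝ) * M)) := ENNReal.tsum_le_tsum h2
      _ = ENNReal.ofReal (∑' k, p k * ((k : ℝ) * M)) := h3
      _ < ⊤ := ENNReal.ofReal_lt_top
  have hYmean : ∫ ω, Y ω ∂P = a * lam := by
    have h1 := hpartB id measurable_id (by simpa using hYint)
    simp only [id] at h1
    rw [h1]
    have h2 : ∀ k : ℕ, p k * ∫ ω, W k ω ∂P = p k * ((k : ℝ) * a) := fun k => by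
      rw [hWmean k]
    rw [tsum_congr h2]
    exact (zzPoissonMean lam a).tsum_eq
  -- second moment of Y
  have hsqmeas : Measurable fun x : ℝ => (x - a * lam) ^ 2 :=
    (measurable_id.sub measurable_const).pow_const 2
  have hYsqint : Integrable (fun ω => (Y ω - a * lam) ^ 2) P := by
    refine ⟨((hYmeas.sub measurable_const).pow_const 2).aestronglyMeasurable, ?_⟩
    have hmeas : Measurable fun x : ℝ => ENNReal.ofReal ((x - a * lam) ^ 2) :=
      hsqmeas.ennreal_ofReal
    have h1 := hpart _ hmeas
    have h2 : ∀ k, P (A k) * ∫⁻ ω, ENNReal.ofReal ((W k ω - a * lam) ^ 2) ∂P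
        = ENNReal.ofReal (p k * ((k : ℝ) * σ ^ 2 + ((k : ℝ) * a - a * lam) ^ 2)) := by
      intro k
      rw [← ofReal_integral_eq_lintegral_ofReal (hWsqint k)
        (ae_of_all _ fun ω => sq_nonneg _), hWsq k, hPA k, ← ENNReal.ofReal_mul (hpnn k)]
    have hsumm : Summable fun k : ℕ =>
        p k * ((k : ℝ) * σ ^ 2 + ((k : ℝ) * a - a * lam) ^ 2) := by
      have := (zzPoissonMoment lam a σ).summable
      simpa [hpdef] using this
    have h3 : (∑' k, ENNReal.ofReal (p k * ((k : ℝ) * σ ^ 2 + ((k : ℝ) * a - a * lam) ^ 2)))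
        = ENNReal.ofReal (∑' k, p k * ((k : ℝ) * σ ^ 2 + ((k : ℝ) * a - a * lam) ^ 2)) :=
      (ENNReal.ofReal_tsum_of_nonneg (fun k => mul_nonneg (hpnn k)
        (add_nonneg (mul_nonneg (Nat.cast_nonneg k) (sq_nonneg σ)) (sq_nonneg _))) hsumm).symm
    show (∫⁻ ω, ‖(Y ω - a * lam) ^ 2‖ₑ ∂P) < ⊤
    have e0 : ∀ ω, ‖(Y ω - a * lam) ^ 2‖ₑ = ENNReal.ofReal ((Y ω - a * lam) ^ 2) := by
      intro ω
      rw [Real.enorm_eq_ofReal_abs, abs_of_nonneg (sq_nonneg _)]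
    calc (∫⁻ ω, ‖(Y ω - a * lam) ^ 2‖ₑ ∂P)
        = ∫⁻ ω, ENNReal.ofReal ((Y ω - a * lam) ^ 2) ∂P := by
          exact lintegral_congr e0
      _ = ∑' k, P (A k) * ∫⁻ ω, ENNReal.ofReal ((W k ω - a * lam) ^ 2) ∂P := h1
      _ = ∑' k, ENNReal.ofReal (p k * ((k : ℝ) * σ ^ 2 + ((k : ℝ) * a - a * lam) ^ 2)) :=
          tsum_congr h2
      _ = ENNReal.ofReal (∑' k, p k * ((k : ℝ) * σ ^ 2 + ((k : ℝ) * a - a * lam) ^ 2)) := h3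
      _ < ⊤ := ENNReal.ofReal_lt_top
  have hYsq : ∫ ω, (Y ω - a * lam) ^ 2 ∂P = lam * σ ^ 2 + a ^ 2 * lam := by
    have h1 := hpartB (fun x => (x - a * lam) ^ 2) hsqmeas hYsqint
    rw [h1, tsum_congr (fun k => by rw [hWsq k])]
    exact (zzPoissonMoment lam a σ).tsum_eq
  -- conclusion via the Taylor estimate
  have hRHS : (0:ℝ) ≤ 1 / (2 * lam) * (1 + σ ^ 2 / a ^ 2) := by positivity
  show zetaM 1 1 (P.map S) (P.map fun _ => (1:ℝ)) ≤ _
  rw [zetaM]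
  apply Real.sSup_le _ hRHS
  rintro r ⟨f, hfz, rfl⟩
  obtain ⟨⟨C, hC⟩, hf1, hfl'⟩ := hfz
  have hl : ∀ x y, |deriv f x - deriv f y| ≤ |x - y| := by
    intro x y
    have := hfl' x y
    simpa [iteratedDeriv_one] using this
  have hfc : Continuous f := hf1.continuous
  have hSmeas : Measurable S := hYmeas.const_mul c
  have h1 : ∫ x, f x ∂(P.map S) = ∫ ω, f (S ω) ∂P :=
    integral_map hSmeas.aemeasurable hfc.aestronglyMeasurable
  have h2 : ∫ x, f x ∂(P.map (fun _ : Ω => (1:ℝ))) = f 1 := by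
    rw [MeasureTheory.Measure.map_const, measure_univ, one_smul, integral_dirac]
  rw [h1, h2]
  set d : ℝ := deriv f 1 with hddef
  have hcal : c * (a * lam) = 1 := by
    rw [hcdef]
    field_simp
  have hS1 : ∀ ω, S ω - 1 = c * (Y ω - a * lam) := by
    intro ω
    rw [hSY ω, ← hcal]
    ring
  have hSint : Integrable S P := by
    have := hYint.const_mul c
    exact this
  have hSmean : ∫ ω, S ω ∂P = 1 := by
    have e : ∫ ω, S ω ∂P = c * ∫ ω, Y ω ∂P := by
      simp only [hSY]
      exact integral_const_mul c Y
    rw [e, hYmean, hcal]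
  have hSsqre : (fun ω => (S ω - 1) ^ 2) = fun ω => c ^ 2 * (Y ω - a * lam) ^ 2 := by
    funext ω
    rw [hS1 ω]
    ring
  have hSsqint : Integrable (fun ω => (S ω - 1) ^ 2) P := by
    rw [hSsqre]
    exact hYsqint.const_mul _
  have hSsq : ∫ ω, (S ω - 1) ^ 2 ∂P = c ^ 2 * (lam * σ ^ 2 + a ^ 2 * lam) := by
    rw [hSsqre, integral_const_mul, hYsq]
  have hfSint : Integrable (fun ω => f (S ω)) P := by
    have hb : MemLp (fun ω => f (S ω)) ⊤ P :=
      memLp_top_of_bound ((hfc.measurable.comp hSmeas).aestronglyMeasurable) C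
        (ae_of_all _ fun ω => by simpa [Real.norm_eq_abs] using hC (S ω))
    exact hb.integrable le_top
  have hSub1 : Integrable (fun ω => S ω - 1) P := by
    exact hSint.sub (integrable_const 1)
  have hG2 : Integrable (fun ω => d * (S ω - 1)) P := by
    exact hSub1.const_mul d
  have hG1 : Integrable (fun ω => f (S ω) - f 1) P := by
    exact hfSint.sub (integrable_const _)
  have hGint : Integrable (fun ω => f (S ω) - f 1 - d * (S ω - 1)) P := by
    exact hG1.sub hG2
  have hGmean : ∫ ω, (f (S ω) - f 1 - d * (S ω - 1)) ∂P = (∫ ω, f (S ω) ∂P) - f 1 := by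
    rw [integral_sub hG1 hG2, integral_sub hfSint (integrable_const (f 1)),
      integral_const_mul, integral_sub hSint (integrable_const 1), hSmean]
    simp
  have hGbound : ∀ ω, |f (S ω) - f 1 - d * (S ω - 1)| ≤ (S ω - 1) ^ 2 / 2 :=
    fun ω => zzTaylor hf1 hl 1 (S ω)
  have habs : |(∫ ω, f (S ω) ∂P) - f 1| ≤ c ^ 2 * (lam * σ ^ 2 + a ^ 2 * lam) / 2 := by
    rw [← hGmean]
    calc |∫ ω, (f (S ω) - f 1 - d * (S ω - 1)) ∂P|
        ≤ ∫ ω, |f (S ω) - f 1 - d * (S ω - 1)| ∂P := by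
          simpa [Real.norm_eq_abs] using
            norm_integral_le_integral_norm (fun ω => f (S ω) - f 1 - d * (S ω - 1)) (μ := P)
      _ ≤ ∫ ω, (S ω - 1) ^ 2 / 2 ∂P := by
          apply integral_mono hGint.abs (hSsqint.div_const 2)
          intro ω
          exact hGbound ω
      _ = c ^ 2 * (lam * σ ^ 2 + a ^ 2 * lam) / 2 := by
          rw [integral_div, hSsq]
  calc |(∫ ω, f (S ω) ∂P) - f 1| ≤ c ^ 2 * (lam * σ ^ 2 + a ^ 2 * lam) / 2 := habs
    _ = 1 / (2 * lam) * (1 + σ ^ 2 / a ^ 2) := by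
        rw [hcdef]
        field_simp
        ring
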